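/- The following are equivalent: (i) L̃ maps C_c(V) into ℓ²(V,m); (ii) for every x ∈ V, the function y ↦ b(x,y)/m(y) belongs to ℓ²(V,m). -/

import Mathlib

/-- The formal Laplacian `L̃u(x) = (1/m(x)) ∑_y b(x,y)(u(x)-u(y)) + (c(x)/m(x))u(x)`. -/
noncomputable def formalL {V : Type*} (b : V → V → ℝ) (c m : V → ℝ) (u : V → ℝ) (x : V) : ℝ :=
  (1 / m x) * ∑' y, b x y * (u x - u y) + (c x / m x) * u x

/-- If two functions agree off a finite set and one is summable, so is the other. -/
lemma summable_of_eq_off_finset {α : Type*} {f g : α → ℝ} (s : Finset α)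
    (h : ∀ x ∉ s, f x = g x) (hg : Summable g) : Summable f := by
  have hfg : Summable (fun x => f x - g x) :=
    summable_of_ne_finset_zero (s := s) (fun x hx => by rw [h x hx]; ring)
  have := hfg.add hg
  have heq : (fun x => f x - g x + g x) = f := by funext x; ring
  rwa [heq] at this

/-- `L̃` maps finitely supported functions into `ℓ²(V,m)` if and only if
for every `x ∈ V` the function `y ↦ b(x,y)/m(y)` belongs to `ℓ²(V,m)`. -/
theorem formalL_maps_Cc_to_l2_iff
    (V : Type*) [Countable V] (m : V → ℝ) (hm : ∀ x, 0 < m x)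
    (b : V → V → ℝ) (c : V → ℝ)
    (hb_symm : ∀ x y, b x y = b y x) (hb_nonneg : ∀ x y, 0 ≤ b x y)
    (hb_diag : ∀ x, b x x = 0) (hb_sum : ∀ x, Summable fun y => b x y)
    (hc : ∀ x, 0 ≤ c x) :
    (∀ φ : V → ℝ, (Function.support φ).Finite →
        Summable fun x => m x * (formalL b c m φ x) ^ 2) ↔
    (∀ x : V, Summable fun y => m y * (b x y / m y) ^ 2) := by
  classical
  constructor
  · intro H z
    set φ : V → ℝ := fun y => if y = z then 1 else 0 with hφdef
    have hsupp : (Function.support φ).Finite := by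
      apply Set.Finite.subset (Set.finite_singleton z)
      intro y hy
      by_contra h
      simp only [Set.mem_singleton_iff] at h
      simp [φ, h] at hy
    have hS := H φ hsupp
    apply summable_of_eq_off_finset {z} _ hS
    intro x hx
    have hxz : x ≠ z := by simpa using hx
    have hφx : φ x = 0 := by simp [φ, hxz]
    have htsum : (∑' y, b x y * (φ x - φ y)) = -(b x z) := by
      rw [tsum_eq_single z]
      · rw [hφx]
        simp only [φ, if_pos rfl]
        ring
      · intro y hy
        have : φ y = 0 := by simp [φ, hy]
        rw [hφx, this]
        ring
    have hL : formalL b c m φ x = -(b x z) / m x := by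
      simp only [formalL]
      rw [htsum, hφx]
      ring
    rw [hL, hb_symm z x]
    ring
  · intro H φ hφ
    set S := hφ.toFinset with hSdef
    set T : V → ℝ := fun x => ∑ y ∈ S, b x y * φ y with hTdef
    have hφ0 : ∀ y ∉ S, φ y = 0 := by
      intro y hy
      by_contra h
      exact hy (hφ.mem_toFinset.mpr h)
    have htsum : ∀ x : V, (∑' y, b x y * φ y) = T x := fun x =>
      tsum_eq_sum (fun y hy => by rw [hφ0 y hy]; ring)
    -- each x ↦ b x y ^ 2 / m x is summable
    have hterm : ∀ y : V, Summable (fun x => b x y ^ 2 / m x) := by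
      intro y
      apply (H y).congr
      intro x
      have hmx := (hm x).ne'
      rw [hb_symm y x]
      field_simp
    -- the majorant is summable
    have hmaj : Summable (fun x => ∑ y ∈ S, (S.card : ℝ) * φ y ^ 2 * (b x y ^ 2 / m x)) := by
      apply summable_sum
      intro y _
      exact (hterm y).mul_left _
    have hT2 : Summable (fun x => T x ^ 2 / m x) := by
      apply Summable.of_nonneg_of_le _ _ hmaj
      · intro x
        exact div_nonneg (sq_nonneg _) (hm x).le
      · intro x
        have hcs : T x ^ 2 ≤ (S.card : ℝ) * ∑ y ∈ S, (b x y * φ y) ^ 2 :=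
          sq_sum_le_card_mul_sum_sq
        have hmx := hm x
        calc T x ^ 2 / m x ≤ ((S.card : ℝ) * ∑ y ∈ S, (b x y * φ y) ^ 2) / m x := by
              exact (div_le_div_iff_of_pos_right hmx).mpr hcs
          _ = ∑ y ∈ S, (S.card : ℝ) * φ y ^ 2 * (b x y ^ 2 / m x) := by
              rw [Finset.mul_sum, Finset.sum_div]
              apply Finset.sum_congr rfl
              intro y _
              field_simp
    -- conclude by comparing off S
    apply summable_of_eq_off_finset S _ hT2
    intro x hxS
    have hφx : φ x = 0 := hφ0 x hxS
    have hL : formalL b c m φ x = -(T x) / m x := by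
      have : (fun y => b x y * (φ x - φ y)) = fun y => -(b x y * φ y) := by
        funext y; rw [hφx]; ring
      rw [formalL, this, tsum_neg, htsum x, hφx]
      ring
    rw [hL]
    have hmx := (hm x).ne'
    field_simp
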